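/- Let φ : 2^V → ℝ be a nonnegative submodular function of range g (i.e., φ(V) = g ≥ 0). Then the base polytope of UpMin(φ) equals the intersection of the base polytope of φ with the standard simplex Δ_g = {q ∈ ℝ^V_{≥0} : q(V) = g}, and also equals the intersection of the base polytope of φ with the nonnegative orthant ℝ^V_{≥0}. -/
import Mathlib


open Finset

/-- The UpMin transform: `UpMin φ I = min_{K ⊇ I} φ K`. -/
noncomputable def UpMin {V : Type*} [Fintype V] [DecidableEq V]
    (φ : Finset V → ℝ) (I : Finset V) : ℝ :=
  ((Finset.univ : Finset (Finset V)).filter fun K => I ⊆ K).inf'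
    ⟨Finset.univ, by simp⟩ φ

lemma upMin_le {V : Type*} [Fintype V] [DecidableEq V]
    (φ : Finset V → ℝ) {I K : Finset V} (h : I ⊆ K) : UpMin φ I ≤ φ K := by
  exact Finset.inf'_le _ (by simp [h])

lemma upMin_univ {V : Type*} [Fintype V] [DecidableEq V]
    (φ : Finset V → ℝ) : UpMin φ Finset.univ = φ Finset.univ := by
  refine le_antisymm (upMin_le φ le_rfl) ?_
  refine Finset.le_inf' _ _ ?_
  intro K hK
  simp only [Finset.mem_filter] at hK
  rw [Finset.univ_subset_iff.mp hK.2]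

/-- For a nonnegative submodular `φ` of range `g`, the base polytope of `UpMin φ`
equals the intersection of the base polytope of `φ` with the standard simplex
`Δ_g = {q ≥ 0 : q(V) = g}`, and also equals the intersection of the base polytope
of `φ` with the nonnegative orthant. -/
theorem base_polytope_upMin
    {V : Type*} [Fintype V] [DecidableEq V] [Nonempty V]
    (φ : Finset V → ℝ) (g : ℝ)
    (h0 : φ ∅ = 0)
    (hsub : ∀ I₁ I₂ : Finset V, φ (I₁ ∪ I₂) + φ (I₁ ∩ I₂) ≤ φ I₁ + φ I₂)
    (hnn : ∀ I : Finset V, 0 ≤ φ I)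
    (hg : φ Finset.univ = g) :
    ({q : V → ℝ | (∀ I : Finset V, ∑ v ∈ I, q v ≤ UpMin φ I) ∧
        ∑ v, q v = UpMin φ Finset.univ} =
      {q : V → ℝ | (∀ I : Finset V, ∑ v ∈ I, q v ≤ φ I) ∧ ∑ v, q v = φ Finset.univ} ∩
        {q : V → ℝ | (∀ v, 0 ≤ q v) ∧ ∑ v, q v = g}) ∧
    ({q : V → ℝ | (∀ I : Finset V, ∑ v ∈ I, q v ≤ UpMin φ I) ∧
        ∑ v, q v = UpMin φ Finset.univ} =
      {q : V → ℝ | (∀ I : Finset V, ∑ v ∈ I, q v ≤ φ I) ∧ ∑ v, q v = φ Finset.univ} ∩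
        {q : V → ℝ | ∀ v, 0 ≤ q v}) := by
  have key : ∀ q : V → ℝ,
      ((∀ I : Finset V, ∑ v ∈ I, q v ≤ UpMin φ I) ∧ ∑ v, q v = UpMin φ Finset.univ) ↔
      (((∀ I : Finset V, ∑ v ∈ I, q v ≤ φ I) ∧ ∑ v, q v = φ Finset.univ) ∧
        (∀ v, 0 ≤ q v)) := by
    intro q
    constructor
    · rintro ⟨hle, heq⟩
      have hqv : ∑ v, q v = φ Finset.univ := by rw [heq, upMin_univ]
      refine ⟨⟨fun I => (hle I).trans (upMin_le φ le_rfl), hqv⟩, ?_⟩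
      intro v
      have h1 : ∑ w ∈ Finset.univ.erase v, q w ≤ φ Finset.univ :=
        (hle _).trans (upMin_le φ (Finset.erase_subset _ _))
      have h2 : q v + ∑ w ∈ Finset.univ.erase v, q w = ∑ w, q w :=
        Finset.add_sum_erase _ _ (Finset.mem_univ v)
      linarith [hqv]
    · rintro ⟨⟨hle, heq⟩, hpos⟩
      refine ⟨fun I => ?_, by rw [upMin_univ]; exact heq⟩
      refine Finset.le_inf' _ _ ?_
      intro K hK
      simp only [Finset.mem_filter] at hK
      calc ∑ v ∈ I, q v ≤ ∑ v ∈ K, q v :=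
            Finset.sum_le_sum_of_subset_of_nonneg hK.2 (fun v _ _ => hpos v)
        _ ≤ φ K := hle K
  constructor
  · ext q
    simp only [Set.mem_setOf_eq, Set.mem_inter_iff]
    rw [key q]
    constructor
    · rintro ⟨h1, h2⟩; exact ⟨h1, h2, by rw [h1.2, hg]⟩
    · rintro ⟨h1, h2, _⟩; exact ⟨h1, h2⟩
  · ext q
    simp only [Set.mem_setOf_eq, Set.mem_inter_iff]
    exact key q
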